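/- arXiv:q-alg/9706023 — 3 statements merged into one kernel-verified Lean document; each statement's English description precedes it below -/
import Mathlib

section
/- Let p, q ∈ ℂ with 0 < |p| < 1 and q ≠ 0, and let L = {pᵐ qⁿ : m, n ∈ ℤ}. Then for every x ∈ ℂ, x ≠ 0, with x ∉ L, the S-matrix function of the deformed Virasoro algebra factorizes as S_TT(x) = f(x)⁻¹ · f(x⁻¹). (This is the Riemann factorization used to derive the quadratic relation (7) on the Fourier coefficients of the deformed Virasoro current.) -/
set_option maxHeartbeats 1600000

/-- The infinite product `(a; b)_∞ = ∏_{n ≥ 0} (1 - a bⁿ)`. -/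
noncomputable def qPoch (a b : ℂ) : ℂ := ∏' n : ℕ, (1 - a * b ^ n)

/-- The structure function `f(x)` of the deformed Virasoro algebra (formula (6)):
`f(x) = (1-x)⁻¹ (xq; p²)_∞ (xpq⁻¹; p²)_∞ / ((xpq; p²)_∞ (xp²q⁻¹; p²)_∞)`. -/
noncomputable def fDV (p q x : ℂ) : ℂ :=
  (1 - x)⁻¹ * (qPoch (x * q) (p ^ 2) * qPoch (x * p * q⁻¹) (p ^ 2)) /
    (qPoch (x * p * q) (p ^ 2) * qPoch (x * p ^ 2 * q⁻¹) (p ^ 2))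

/-- `θ_a(x) = ∏_{n ≥ 1} (1 - x a^{n-1})(1 - x⁻¹ aⁿ)(1 - aⁿ)`. -/
noncomputable def theta (a x : ℂ) : ℂ :=
  ∏' n : ℕ, ((1 - x * a ^ n) * (1 - x⁻¹ * a ^ (n + 1)) * (1 - a ^ (n + 1)))

/-- The S-matrix function of the deformed Virasoro algebra:
`S_TT(x) = θ_{p²}(xp) θ_{p²}(xq⁻¹) θ_{p²}(xp⁻¹q) / (θ_{p²}(xp⁻¹) θ_{p²}(xq) θ_{p²}(xpq⁻¹))`. -/
noncomputable def STT (p q x : ℂ) : ℂ :=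
  theta (p ^ 2) (x * p) * theta (p ^ 2) (x * q⁻¹) * theta (p ^ 2) (x * p⁻¹ * q) /
    (theta (p ^ 2) (x * p⁻¹) * theta (p ^ 2) (x * q) * theta (p ^ 2) (x * p * q⁻¹))

lemma qPoch_summable_log {c b : ℂ} (hb : ‖b‖ < 1) :
    Summable fun n : ℕ => Complex.log (1 - c * b ^ n) := by
  have hgeo : Summable fun n : ℕ => (3/2 * ‖c‖) * (‖b‖) ^ n :=
    (summable_geometric_of_lt_one (norm_nonneg b) hb).mul_left _
  refine Summable.of_norm_bounded_eventually_nat hgeo ?_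
  have htend : Filter.Tendsto (fun n : ℕ => ‖c‖ * ‖b‖ ^ n)
      Filter.atTop (nhds 0) := by
    simpa using (tendsto_pow_atTop_nhds_zero_of_lt_one (norm_nonneg b) hb).const_mul
      (‖c‖)
  have hev : ∀ᶠ n : ℕ in Filter.atTop, ‖c‖ * ‖b‖ ^ n ≤ 1/2 := by
    have := htend.eventually_le_const (by norm_num : (0:ℝ) < 1/2)
    simpa using this
  filter_upwards [hev] with n hn
  have hz : ‖-(c * b ^ n)‖ ≤ 1/2 := by
    simpa [norm_mul, norm_pow] using hn
  have := Complex.norm_log_one_add_half_le_self hz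
  calc ‖Complex.log (1 - c * b ^ n)‖ = ‖Complex.log (1 + -(c * b ^ n))‖ := by
        rw [sub_eq_add_neg]
    _ ≤ 3/2 * ‖-(c * b ^ n)‖ := this
    _ = 3/2 * ‖c‖ * ‖b‖ ^ n := by
        simp [norm_mul, norm_pow]; ring
    _ = (3/2 * ‖c‖) * ‖b‖ ^ n := by ring

lemma qPoch_multipliable {c b : ℂ} (hb : ‖b‖ < 1)
    (h : ∀ n : ℕ, 1 - c * b ^ n ≠ 0) :
    Multipliable fun n : ℕ => 1 - c * b ^ n :=
  Complex.multipliable_of_summable_log (qPoch_summable_log hb)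

lemma qPoch_ne_zero {c b : ℂ} (hb : ‖b‖ < 1)
    (h : ∀ n : ℕ, 1 - c * b ^ n ≠ 0) : qPoch c b ≠ 0 := by
  have := Complex.cexp_tsum_eq_tprod (f := fun n : ℕ => 1 - c * b ^ n) h
    (qPoch_summable_log hb)
  rw [qPoch, ← this]
  exact Complex.exp_ne_zero _

lemma qPoch_shift {c b : ℂ} (hb : ‖b‖ < 1)
    (h : ∀ n : ℕ, 1 - c * b ^ n ≠ 0) :
    qPoch c b = (1 - c) * qPoch (c * b) b := by
  have h' : ∀ n : ℕ, 1 - (c * b) * b ^ n ≠ 0 :=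
    fun n hc => h (n + 1) (by linear_combination hc)
  have hm' := qPoch_multipliable hb h'
  have h1 : qPoch (c * b) b = ∏' n : ℕ, (1 - c * b ^ (n + 1)) := by
    rw [qPoch]
    exact tprod_congr fun n => by ring
  have hm2 : Multipliable fun n : ℕ => 1 - c * b ^ (n + 1) := by
    have hfun : (fun n : ℕ => 1 - c * b ^ (n + 1)) = fun n : ℕ => 1 - (c * b) * b ^ n :=
      funext fun n => by ring
    rw [hfun]; exact hm'
  have h2 := tprod_eq_zero_mul' (f := fun n : ℕ => 1 - c * b ^ n) hm2
  simp only [pow_zero, mul_one] at h2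
  rw [qPoch, h2, h1]

lemma theta_eq {b y : ℂ} (hb : ‖b‖ < 1)
    (h1 : ∀ n : ℕ, 1 - y * b ^ n ≠ 0) (h2 : ∀ n : ℕ, 1 - (y⁻¹ * b) * b ^ n ≠ 0)
    (h3 : ∀ n : ℕ, 1 - b * b ^ n ≠ 0) :
    theta b y = qPoch y b * qPoch (y⁻¹ * b) b * qPoch b b := by
  have m1 := qPoch_multipliable hb h1
  have m2 := qPoch_multipliable hb h2
  have m3 := qPoch_multipliable hb h3
  rw [theta, qPoch, qPoch, qPoch]
  rw [show (fun n : ℕ => (1 - y * b ^ n) * (1 - y⁻¹ * b ^ (n+1)) * (1 - b ^ (n+1)))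
      = fun n : ℕ => ((1 - y * b ^ n) * (1 - (y⁻¹ * b) * b ^ n)) * (1 - b * b ^ n) from
      funext fun n => by ring]
  rw [(m1.mul m2).tprod_mul m3, m1.tprod_mul m2]

lemma factor_ne_pos {p q x : ℂ} (hp : p ≠ 0) (hq : q ≠ 0)
    (hxL : ¬ ∃ m n : ℤ, x = p ^ m * q ^ n) (m k : ℤ) (c : ℂ)
    (hc : c = x * p ^ m * q ^ k) (n : ℕ) : 1 - c * (p ^ 2) ^ n ≠ 0 := by
  intro h0
  apply hxL
  refine ⟨-(m + (2 * n : ℕ)), -k, ?_⟩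
  have h1 : x * (p ^ (m + (2 * n : ℕ) : ℤ) * q ^ k) = 1 := by
    rw [zpow_add₀ hp, zpow_natCast, pow_mul]
    linear_combination -h0 - (p ^ 2) ^ n * hc
  rw [zpow_neg, zpow_neg, ← mul_inv]
  exact eq_inv_of_mul_eq_one_left h1

lemma factor_ne_neg {p q x : ℂ} (hp : p ≠ 0) (hq : q ≠ 0) (hx : x ≠ 0)
    (hxL : ¬ ∃ m n : ℤ, x = p ^ m * q ^ n) (m k : ℤ) (c : ℂ)
    (hc : c = x⁻¹ * p ^ m * q ^ k) (n : ℕ) : 1 - c * (p ^ 2) ^ n ≠ 0 := by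
  intro h0
  apply hxL
  refine ⟨(m + (2 * n : ℕ) : ℤ), k, ?_⟩
  have h1 : x⁻¹ * (p ^ m * (p ^ 2) ^ n * q ^ k) = 1 := by
    linear_combination -h0 - (p ^ 2) ^ n * hc
  have h2 : p ^ m * (p ^ 2) ^ n * q ^ k = (x⁻¹)⁻¹ := eq_inv_of_mul_eq_one_right h1
  rw [inv_inv] at h2
  rw [zpow_add₀ hp, zpow_natCast, pow_mul]
  linear_combination -h2

lemma factor_ne_p {p : ℂ} (hp1 : ‖p‖ < 1)
    (n : ℕ) : 1 - p ^ 2 * (p ^ 2) ^ n ≠ 0 := by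
  intro h0
  have h1 : p ^ 2 * (p ^ 2) ^ n = 1 := by linear_combination -h0
  have h2 := congrArg (‖·‖) h1
  rw [norm_mul, norm_pow, norm_pow, norm_pow, norm_one] at h2
  have ha : ‖p‖ ^ 2 < 1 :=
    pow_lt_one₀ (norm_nonneg _) hp1 two_ne_zero
  have hbn : (‖p‖ ^ 2) ^ n ≤ 1 := pow_le_one₀ (by positivity) ha.le
  have h3 : ‖p‖ ^ 2 * (‖p‖ ^ 2) ^ n ≤ ‖p‖ ^ 2 * 1 :=
    mul_le_mul_of_nonneg_left hbn (by positivity)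
  rw [mul_one] at h3
  linarith

/-- Riemann factorization of the S-matrix function of the deformed Virasoro algebra:
for `x ∉ L = pᶻqᶻ`, `S_TT(x) = f(x)⁻¹ · f(x⁻¹)`. -/
theorem STT_riemann_factorization
    (p q x : ℂ) (hp0 : 0 < ‖p‖) (hp1 : ‖p‖ < 1) (hq : q ≠ 0)
    (hx : x ≠ 0) (hxL : ¬ ∃ m n : ℤ, x = p ^ m * q ^ n) :
    STT p q x = (fDV p q x)⁻¹ * fDV p q x⁻¹ := by
  have hp : p ≠ 0 := by
    intro h; rw [h] at hp0; simp at hp0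
  have hb : ‖p ^ 2‖ < 1 := by
    rw [norm_pow]
    exact pow_lt_one₀ (norm_nonneg _) hp1 two_ne_zero
  -- factor nonvanishing facts
  have ne_xp : ∀ n : ℕ, 1 - (x * p) * (p ^ 2) ^ n ≠ 0 :=
    factor_ne_pos hp hq hxL 1 0 _ (by simp)
  have ne_xp2qi : ∀ n : ℕ, 1 - (x * p ^ 2 * q⁻¹) * (p ^ 2) ^ n ≠ 0 :=
    factor_ne_pos hp hq hxL 2 (-1) _ (by simp [zpow_ofNat, zpow_neg])
  have ne_xpq : ∀ n : ℕ, 1 - (x * p * q) * (p ^ 2) ^ n ≠ 0 :=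
    factor_ne_pos hp hq hxL 1 1 _ (by simp)
  have ne_xq : ∀ n : ℕ, 1 - (x * q) * (p ^ 2) ^ n ≠ 0 :=
    factor_ne_pos hp hq hxL 0 1 _ (by simp)
  have ne_xpqi : ∀ n : ℕ, 1 - (x * p * q⁻¹) * (p ^ 2) ^ n ≠ 0 :=
    factor_ne_pos hp hq hxL 1 (-1) _ (by simp [zpow_neg])
  have ne_xpi : ∀ n : ℕ, 1 - (x * p⁻¹) * (p ^ 2) ^ n ≠ 0 :=
    factor_ne_pos hp hq hxL (-1) 0 _ (by simp [zpow_neg])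
  have ne_xqi : ∀ n : ℕ, 1 - (x * q⁻¹) * (p ^ 2) ^ n ≠ 0 :=
    factor_ne_pos hp hq hxL 0 (-1) _ (by simp [zpow_neg])
  have ne_xpiq : ∀ n : ℕ, 1 - (x * p⁻¹ * q) * (p ^ 2) ^ n ≠ 0 :=
    factor_ne_pos hp hq hxL (-1) 1 _ (by simp [zpow_neg])
  have ne_x : ∀ n : ℕ, 1 - x * (p ^ 2) ^ n ≠ 0 :=
    factor_ne_pos hp hq hxL 0 0 _ (by simp)
  have ne_ip3 : ∀ n : ℕ, 1 - (x⁻¹ * p ^ 3) * (p ^ 2) ^ n ≠ 0 :=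
    factor_ne_neg hp hq hx hxL 3 0 _ (by simp [zpow_ofNat])
  have ne_ip2q : ∀ n : ℕ, 1 - (x⁻¹ * p ^ 2 * q) * (p ^ 2) ^ n ≠ 0 :=
    factor_ne_neg hp hq hx hxL 2 1 _ (by simp [zpow_ofNat])
  have ne_ip3qi : ∀ n : ℕ, 1 - (x⁻¹ * p ^ 3 * q⁻¹) * (p ^ 2) ^ n ≠ 0 :=
    factor_ne_neg hp hq hx hxL 3 (-1) _ (by simp [zpow_ofNat, zpow_neg])
  have ne_ip2qi : ∀ n : ℕ, 1 - (x⁻¹ * p ^ 2 * q⁻¹) * (p ^ 2) ^ n ≠ 0 :=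
    factor_ne_neg hp hq hx hxL 2 (-1) _ (by simp [zpow_ofNat, zpow_neg])
  have ne_ipq : ∀ n : ℕ, 1 - (x⁻¹ * p * q) * (p ^ 2) ^ n ≠ 0 :=
    factor_ne_neg hp hq hx hxL 1 1 _ (by simp)
  have ne_ip : ∀ n : ℕ, 1 - (x⁻¹ * p) * (p ^ 2) ^ n ≠ 0 :=
    factor_ne_neg hp hq hx hxL 1 0 _ (by simp)
  have ne_iq : ∀ n : ℕ, 1 - (x⁻¹ * q) * (p ^ 2) ^ n ≠ 0 :=
    factor_ne_neg hp hq hx hxL 0 1 _ (by simp)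
  have ne_ipqi : ∀ n : ℕ, 1 - (x⁻¹ * p * q⁻¹) * (p ^ 2) ^ n ≠ 0 :=
    factor_ne_neg hp hq hx hxL 1 (-1) _ (by simp [zpow_neg])
  have ne_i : ∀ n : ℕ, 1 - x⁻¹ * (p ^ 2) ^ n ≠ 0 :=
    factor_ne_neg hp hq hx hxL 0 0 _ (by simp)
  have ne_K : ∀ n : ℕ, 1 - p ^ 2 * (p ^ 2) ^ n ≠ 0 := factor_ne_p hp1
  -- qPoch nonvanishing
  have hA1 := qPoch_ne_zero hb ne_xp
  have hA2 := qPoch_ne_zero hb ne_ip3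
  have hA3 := qPoch_ne_zero hb ne_xp2qi
  have hA4 := qPoch_ne_zero hb ne_ip2q
  have hA5 := qPoch_ne_zero hb ne_xpq
  have hA6 := qPoch_ne_zero hb ne_ip3qi
  have hA7 := qPoch_ne_zero hb ne_xq
  have hA8 := qPoch_ne_zero hb ne_ip2qi
  have hA9 := qPoch_ne_zero hb ne_xpqi
  have hA10 := qPoch_ne_zero hb ne_ipq
  have hKq := qPoch_ne_zero hb ne_K
  -- scalar nonvanishing
  have h1x : (1 : ℂ) - x ≠ 0 := by simpa using ne_x 0
  have h1xi : (1 : ℂ) - x⁻¹ ≠ 0 := by simpa using ne_i 0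
  have h1xpi : (1 : ℂ) - x * p⁻¹ ≠ 0 := by simpa using ne_xpi 0
  -- shift identities
  have s1 : qPoch (x⁻¹ * p) (p ^ 2) = (1 - x⁻¹ * p) * qPoch (x⁻¹ * p ^ 3) (p ^ 2) := by
    have h := qPoch_shift hb ne_ip
    rwa [show x⁻¹ * p * p ^ 2 = x⁻¹ * p ^ 3 from by ring] at h
  have s2 : qPoch (x * p⁻¹) (p ^ 2) = (1 - x * p⁻¹) * qPoch (x * p) (p ^ 2) := by
    have h := qPoch_shift hb ne_xpi
    rwa [show x * p⁻¹ * p ^ 2 = x * p from by first | (field_simp; ring) | field_simp] at h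
  have s3 : qPoch (x⁻¹ * q) (p ^ 2) = (1 - x⁻¹ * q) * qPoch (x⁻¹ * p ^ 2 * q) (p ^ 2) := by
    have h := qPoch_shift hb ne_iq
    rwa [show x⁻¹ * q * p ^ 2 = x⁻¹ * p ^ 2 * q from by ring] at h
  have s4 : qPoch (x * q⁻¹) (p ^ 2) = (1 - x * q⁻¹) * qPoch (x * p ^ 2 * q⁻¹) (p ^ 2) := by
    have h := qPoch_shift hb ne_xqi
    rwa [show x * q⁻¹ * p ^ 2 = x * p ^ 2 * q⁻¹ from by ring] at h
  have s5 : qPoch (x * p⁻¹ * q) (p ^ 2) = (1 - x * p⁻¹ * q) * qPoch (x * p * q) (p ^ 2) := by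
    have h := qPoch_shift hb ne_xpiq
    rwa [show x * p⁻¹ * q * p ^ 2 = x * p * q from by first | (field_simp; ring) | field_simp] at h
  have s6 : qPoch (x⁻¹ * p * q⁻¹) (p ^ 2)
      = (1 - x⁻¹ * p * q⁻¹) * qPoch (x⁻¹ * p ^ 3 * q⁻¹) (p ^ 2) := by
    have h := qPoch_shift hb ne_ipqi
    rwa [show x⁻¹ * p * q⁻¹ * p ^ 2 = x⁻¹ * p ^ 3 * q⁻¹ from by ring] at h
  -- theta factorizations
  have harg1 : (x * p)⁻¹ * p ^ 2 = x⁻¹ * p := by first | (field_simp; ring) | field_simp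
  have harg2 : (x * q⁻¹)⁻¹ * p ^ 2 = x⁻¹ * p ^ 2 * q := by first | (field_simp; ring) | field_simp
  have harg3 : (x * p⁻¹ * q)⁻¹ * p ^ 2 = x⁻¹ * p ^ 3 * q⁻¹ := by first | (field_simp; ring) | field_simp
  have harg4 : (x * p⁻¹)⁻¹ * p ^ 2 = x⁻¹ * p ^ 3 := by first | (field_simp; ring) | field_simp
  have harg5 : (x * q)⁻¹ * p ^ 2 = x⁻¹ * p ^ 2 * q⁻¹ := by first | (field_simp; ring) | field_simp
  have harg6 : (x * p * q⁻¹)⁻¹ * p ^ 2 = x⁻¹ * p * q := by first | (field_simp; ring) | field_simp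
  have t1 : theta (p ^ 2) (x * p)
      = qPoch (x * p) (p ^ 2) * qPoch (x⁻¹ * p) (p ^ 2) * qPoch (p ^ 2) (p ^ 2) := by
    rw [theta_eq hb ne_xp (fun n => by rw [harg1]; exact ne_ip n) ne_K, harg1]
  have t2 : theta (p ^ 2) (x * q⁻¹)
      = qPoch (x * q⁻¹) (p ^ 2) * qPoch (x⁻¹ * p ^ 2 * q) (p ^ 2) * qPoch (p ^ 2) (p ^ 2) := by
    rw [theta_eq hb ne_xqi (fun n => by rw [harg2]; exact ne_ip2q n) ne_K, harg2]
  have t3 : theta (p ^ 2) (x * p⁻¹ * q)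
      = qPoch (x * p⁻¹ * q) (p ^ 2) * qPoch (x⁻¹ * p ^ 3 * q⁻¹) (p ^ 2)
        * qPoch (p ^ 2) (p ^ 2) := by
    rw [theta_eq hb ne_xpiq (fun n => by rw [harg3]; exact ne_ip3qi n) ne_K, harg3]
  have t4 : theta (p ^ 2) (x * p⁻¹)
      = qPoch (x * p⁻¹) (p ^ 2) * qPoch (x⁻¹ * p ^ 3) (p ^ 2) * qPoch (p ^ 2) (p ^ 2) := by
    rw [theta_eq hb ne_xpi (fun n => by rw [harg4]; exact ne_ip3 n) ne_K, harg4]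
  have t5 : theta (p ^ 2) (x * q)
      = qPoch (x * q) (p ^ 2) * qPoch (x⁻¹ * p ^ 2 * q⁻¹) (p ^ 2) * qPoch (p ^ 2) (p ^ 2) := by
    rw [theta_eq hb ne_xq (fun n => by rw [harg5]; exact ne_ip2qi n) ne_K, harg5]
  have t6 : theta (p ^ 2) (x * p * q⁻¹)
      = qPoch (x * p * q⁻¹) (p ^ 2) * qPoch (x⁻¹ * p * q) (p ^ 2) * qPoch (p ^ 2) (p ^ 2) := by
    rw [theta_eq hb ne_xpqi (fun n => by rw [harg6]; exact ne_ipq n) ne_K, harg6]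
  -- assembling
  have hfrac : ∀ s N D : ℂ, s⁻¹ * N / D = N / (s * D) := fun s N D => by
    rw [div_eq_mul_inv, div_eq_mul_inv, mul_inv]; ring
  rw [STT, fDV, fDV, t1, t2, t3, t4, t5, t6, s1, s2, s3, s4, s5, s6]
  rw [hfrac, hfrac]
  rw [inv_div, div_mul_div_comm, div_eq_div_iff (by
      apply_rules [mul_ne_zero, inv_ne_zero, h1x, h1xpi, hA1, hA2, hA7, hA8, hA9, hA10, hKq])
    (by apply_rules [mul_ne_zero, inv_ne_zero, h1x, h1xpi, hA4, hA5, hA3, hA7, hA8, hA9, hA10,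
      hA6, hKq, h1xi])]
  field_simp
  ring
end

section
/- Let p, q ∈ ℂ with 0 < |p| < 1 and q ≠ 0, and let L = {pᵐ qⁿ : m, n ∈ ℤ}. Then for every x ∈ ℂ, x ≠ 0, with x ∉ L, the S-matrix function of the deformed Virasoro algebra admits the second Riemann factorization S_TT(x) = f(x p) · f(x⁻¹ p⁻¹)⁻¹. (This alternative factorization yields the new quadratic relation on the deformed Virasoro generators involving the fused fields T₂^q and T₂^{p/q}.) -/
open Complex Filter

lemma summable_log_fac {a : ℂ} (ha : ‖a‖ < 1) (y : ℂ) :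
    Summable fun n : ℕ => Complex.log (1 - y * a ^ n) := by
  have ha' : ‖a‖ < 1 := ha
  have hgeo : Summable fun n : ℕ => 3 / 2 * (‖y‖ * ‖a‖ ^ n) :=
    ((summable_geometric_of_lt_one (norm_nonneg a) ha').mul_left _).mul_left _
  refine Summable.of_norm_bounded_eventually_nat hgeo ?_
  have h0 : Tendsto (fun n : ℕ => ‖y‖ * ‖a‖ ^ n) atTop (nhds 0) := by
    simpa using (tendsto_pow_atTop_nhds_zero_of_lt_one (norm_nonneg a) ha').const_mul ‖y‖
  filter_upwards [h0.eventually_le_const (by norm_num : (0:ℝ) < 1/2)] with n hn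
  have hyn : ‖-(y * a ^ n)‖ ≤ 1/2 := by rwa [norm_neg, norm_mul, norm_pow]
  have hb := Complex.norm_log_one_add_half_le_self hyn
  have he : (1 : ℂ) + -(y * a ^ n) = 1 - y * a ^ n := by ring
  rw [he] at hb
  calc ‖Complex.log (1 - y * a ^ n)‖ ≤ 3/2 * ‖-(y * a ^ n)‖ := hb
    _ = 3/2 * (‖y‖ * ‖a‖ ^ n) := by rw [norm_neg, norm_mul, norm_pow]

lemma multipliable_fac {a : ℂ} (ha : ‖a‖ < 1) {y : ℂ}
    (hz : ∀ n : ℕ, 1 - y * a ^ n ≠ 0) : Multipliable fun n : ℕ => 1 - y * a ^ n :=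
  Complex.multipliable_of_summable_log (summable_log_fac ha y)

lemma qPoch_ne_zero_s3 {a : ℂ} (ha : ‖a‖ < 1) {y : ℂ}
    (hz : ∀ n : ℕ, 1 - y * a ^ n ≠ 0) : qPoch y a ≠ 0 := by
  have h2 := Complex.cexp_tsum_eq_tprod (f := fun n : ℕ => 1 - y * a ^ n) hz (summable_log_fac ha y)
  rw [qPoch, ← h2]
  exact Complex.exp_ne_zero _

lemma qPoch_shift_s3 {a : ℂ} (ha : ‖a‖ < 1) {y : ℂ} (z : ℂ) (hzy : z = y * a)
    (hz : ∀ n : ℕ, 1 - z * a ^ n ≠ 0) :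
    qPoch y a = (1 - y) * qPoch z a := by
  have hm : Multipliable fun n : ℕ => 1 - z * a ^ n := multipliable_fac ha hz
  have he : (fun n : ℕ => 1 - y * a ^ (n + 1)) = fun n : ℕ => 1 - z * a ^ n := by
    funext n; rw [hzy]; ring
  rw [qPoch, tprod_eq_zero_mul' (f := fun n : ℕ => 1 - y * a ^ n) (by rw [show (fun n : ℕ => (1 : ℂ) - y * a ^ (n + 1)) = fun n : ℕ => 1 - z * a ^ n from he]; exact hm)]
  rw [pow_zero, mul_one, qPoch]
  congr 1
  exact tprod_congr fun n => by rw [hzy]; ring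

lemma theta_eq_s3 {a : ℂ} (ha : ‖a‖ < 1) {x u : ℂ} (hu : u = x⁻¹ * a)
    (h1 : ∀ n : ℕ, 1 - x * a ^ n ≠ 0) (h2 : ∀ n : ℕ, 1 - u * a ^ n ≠ 0)
    (h3 : ∀ n : ℕ, 1 - a * a ^ n ≠ 0) :
    theta a x = qPoch x a * qPoch u a * qPoch a a := by
  have hm1 := multipliable_fac ha h1
  have hm2 := multipliable_fac ha h2
  have hm3 := multipliable_fac ha h3
  have he : (fun n : ℕ => (1 - x * a ^ n) * (1 - x⁻¹ * a ^ (n + 1)) * (1 - a ^ (n + 1)))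
      = fun n : ℕ => (1 - x * a ^ n) * ((1 - u * a ^ n) * (1 - a * a ^ n)) := by
    funext n; rw [hu]; ring
  rw [theta, he, hm1.tprod_mul (hm2.mul hm3), hm2.tprod_mul hm3, ← qPoch, ← qPoch, ← qPoch, mul_assoc]

lemma lattice_pure {p : ℂ} (hp1 : ‖p‖ < 1) :
    ∀ k : ℕ, 1 - (p ^ 2 : ℂ) * (p ^ 2) ^ k ≠ 0 := by
  intro k
  rw [sub_ne_zero]
  intro h
  have h1 : (p ^ 2 : ℂ) * (p ^ 2) ^ k = (p ^ 2) ^ (k + 1) := by ring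
  have h2 : ‖(p ^ 2 : ℂ) ^ (k + 1)‖ < 1 := by
    rw [norm_pow, norm_pow]
    exact pow_lt_one₀ (pow_nonneg (norm_nonneg p) 2)
      (pow_lt_one₀ (norm_nonneg p) hp1 two_ne_zero) (Nat.succ_ne_zero k)
  rw [← h1, ← h] at h2
  simp at h2

lemma lattice_x {p q x : ℂ} (hp : p ≠ 0) (hq : q ≠ 0)
    (hxL : ¬ ∃ m n : ℤ, x = p ^ m * q ^ n) (m n : ℤ) :
    ∀ k : ℕ, 1 - x * (p ^ m * q ^ n) * (p ^ 2) ^ k ≠ 0 := by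
  intro k
  rw [sub_ne_zero]
  intro h
  apply hxL
  refine ⟨-(m + 2 * k), -n, ?_⟩
  have hpk : ((p ^ 2) ^ k : ℂ) = p ^ ((2 * k : ℕ) : ℤ) := by
    rw [zpow_natCast, pow_mul]
  rw [hpk] at h
  have e1 : (p : ℂ) ^ (m + 2 * k : ℤ) = p ^ m * p ^ ((2 * k : ℕ) : ℤ) := by
    rw [← zpow_add₀ hp]
    congr 1
  rw [zpow_neg, zpow_neg, e1, ← mul_inv]
  exact eq_inv_of_mul_eq_one_right (by linear_combination -h)

lemma lattice_xinv {p q x : ℂ} (hp : p ≠ 0) (hq : q ≠ 0) (hx : x ≠ 0)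
    (hxL : ¬ ∃ m n : ℤ, x = p ^ m * q ^ n) (m n : ℤ) :
    ∀ k : ℕ, 1 - x⁻¹ * (p ^ m * q ^ n) * (p ^ 2) ^ k ≠ 0 := by
  intro k
  rw [sub_ne_zero]
  intro h
  apply hxL
  refine ⟨m + 2 * k, n, ?_⟩
  have hpk : ((p ^ 2) ^ k : ℂ) = p ^ ((2 * k : ℕ) : ℤ) := by
    rw [zpow_natCast, pow_mul]
  rw [hpk] at h
  have e1 : (p : ℂ) ^ (m + 2 * k : ℤ) = p ^ m * p ^ ((2 * k : ℕ) : ℤ) := by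
    rw [← zpow_add₀ hp]
    congr 1
  rw [e1]
  have hxi : x⁻¹ * x = 1 := inv_mul_cancel₀ hx
  linear_combination x * h + (p ^ m * p ^ ((2 * k : ℕ) : ℤ) * q ^ n) * hxi

set_option maxHeartbeats 3200000 in
lemma key_alg (p q x A B C D E F G H I J K : ℂ)
    (hp : p ≠ 0) (hq : q ≠ 0) (hx : x ≠ 0)
    (lz1 : 1 - x * p ≠ 0) (lz4 : 1 - x * p⁻¹ ≠ 0) (lz5 : 1 - x * q ≠ 0)
    (lz6 : 1 - x * p * q⁻¹ ≠ 0) (lw7 : 1 - x⁻¹ * p⁻¹ * q ≠ 0) (lw8 : 1 - x⁻¹ * q⁻¹ ≠ 0)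
    (lw9 : 1 - x⁻¹ * q ≠ 0) (lw10 : 1 - x⁻¹ * p * q⁻¹ ≠ 0) (lw11 : 1 - x⁻¹ * p⁻¹ ≠ 0)
    (hA : A ≠ 0) (hB : B ≠ 0) (hC : C ≠ 0) (hD : D ≠ 0) (hE : E ≠ 0) (hF : F ≠ 0)
    (hG : G ≠ 0) (hH : H ≠ 0) (hI : I ≠ 0) (hJ : J ≠ 0) (hK : K ≠ 0) :
    A * ((1 - x⁻¹ * p) * B) * K * ((1 - x * q⁻¹) * E * H * K) * ((1 - x * p⁻¹ * q) * C * J * K) /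
      ((1 - x * p⁻¹) * A * B * K * ((1 - x * q) * D * I * K) * ((1 - x * p * q⁻¹) * F * G * K)) =
    (1 - x * p)⁻¹ * (C * E) / (D * F) *
      ((1 - x⁻¹ * p⁻¹)⁻¹ * ((1 - x⁻¹ * p⁻¹ * q) * G * ((1 - x⁻¹ * q⁻¹) * I)) /
          ((1 - x⁻¹ * q) * H * ((1 - x⁻¹ * p * q⁻¹) * J)))⁻¹ := by
  have d1 : p - x ≠ 0 := by
    rw [sub_ne_zero]; intro h; apply lz4; rw [sub_eq_zero, ← h, mul_inv_cancel₀ hp]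
  have d2 : q - x * p ≠ 0 := by
    rw [sub_ne_zero]; intro h; apply lz6; rw [sub_eq_zero, ← h, mul_inv_cancel₀ hq]
  have d3 : x * p - q ≠ 0 := by
    rw [sub_ne_zero]; intro h; apply lw7; rw [sub_eq_zero, ← h]; field_simp
  have d4 : x * q - 1 ≠ 0 := by
    rw [sub_ne_zero]; intro h; apply lw8; rw [sub_eq_zero, ← mul_inv, h, inv_one]
  have d5 : x - q ≠ 0 := by
    rw [sub_ne_zero]; intro h; apply lw9; rw [sub_eq_zero, h, inv_mul_cancel₀ hq]
  have d6 : x * q - p ≠ 0 := by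
    rw [sub_ne_zero]; intro h; apply lw10; rw [sub_eq_zero, ← h]; field_simp
  have d7 : x * p - 1 ≠ 0 := by
    rw [sub_ne_zero]; intro h; apply lw11; rw [sub_eq_zero, ← mul_inv, h, inv_one]
  field_simp
  ring

set_option maxHeartbeats 4000000 in
/-- Second Riemann factorization of the S-matrix function of the deformed Virasoro
algebra: for `x ∉ L = pᶻqᶻ`, `S_TT(x) = f(xp) · f(x⁻¹p⁻¹)⁻¹`. -/
theorem STT_second_riemann_factorization
    (p q x : ℂ) (hp0 : 0 < ‖p‖) (hp1 : ‖p‖ < 1) (hq : q ≠ 0)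
    (hx : x ≠ 0) (hxL : ¬ ∃ m n : ℤ, x = p ^ m * q ^ n) :
    STT p q x = fDV p q (x * p) * (fDV p q (x⁻¹ * p⁻¹))⁻¹ := by
  have hp : p ≠ 0 := by intro h; rw [h] at hp0; simp at hp0
  have ha : ‖p ^ 2‖ < 1 := by
    rw [norm_pow]
    exact pow_lt_one₀ (norm_nonneg p) hp1 two_ne_zero
  have zP : ∀ k : ℕ, 1 - (p ^ 2 : ℂ) * (p ^ 2) ^ k ≠ 0 := lattice_pure hp1
  have z1 : ∀ k : ℕ, 1 - x * p * (p ^ 2) ^ k ≠ 0 := fun k => by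
    have h := lattice_x hp hq hxL (1 : ℤ) (0 : ℤ) k
    rwa [show x * (p ^ (1 : ℤ) * q ^ (0 : ℤ)) = x * p from by simp only [zpow_neg, zpow_one, zpow_zero, zpow_ofNat]; ring] at h
  have z2 : ∀ k : ℕ, 1 - x * q⁻¹ * (p ^ 2) ^ k ≠ 0 := fun k => by
    have h := lattice_x hp hq hxL (0 : ℤ) (-1 : ℤ) k
    rwa [show x * (p ^ (0 : ℤ) * q ^ (-1 : ℤ)) = x * q⁻¹ from by simp only [zpow_neg, zpow_one, zpow_zero, zpow_ofNat]; ring] at h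
  have z3 : ∀ k : ℕ, 1 - x * p⁻¹ * q * (p ^ 2) ^ k ≠ 0 := fun k => by
    have h := lattice_x hp hq hxL (-1 : ℤ) (1 : ℤ) k
    rwa [show x * (p ^ (-1 : ℤ) * q ^ (1 : ℤ)) = x * p⁻¹ * q from by simp only [zpow_neg, zpow_one, zpow_zero, zpow_ofNat]; ring] at h
  have z4 : ∀ k : ℕ, 1 - x * p⁻¹ * (p ^ 2) ^ k ≠ 0 := fun k => by
    have h := lattice_x hp hq hxL (-1 : ℤ) (0 : ℤ) k
    rwa [show x * (p ^ (-1 : ℤ) * q ^ (0 : ℤ)) = x * p⁻¹ from by simp only [zpow_neg, zpow_one, zpow_zero, zpow_ofNat]; ring] at h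
  have z5 : ∀ k : ℕ, 1 - x * q * (p ^ 2) ^ k ≠ 0 := fun k => by
    have h := lattice_x hp hq hxL (0 : ℤ) (1 : ℤ) k
    rwa [show x * (p ^ (0 : ℤ) * q ^ (1 : ℤ)) = x * q from by simp only [zpow_neg, zpow_one, zpow_zero, zpow_ofNat]; ring] at h
  have z6 : ∀ k : ℕ, 1 - x * p * q⁻¹ * (p ^ 2) ^ k ≠ 0 := fun k => by
    have h := lattice_x hp hq hxL (1 : ℤ) (-1 : ℤ) k
    rwa [show x * (p ^ (1 : ℤ) * q ^ (-1 : ℤ)) = x * p * q⁻¹ from by simp only [zpow_neg, zpow_one, zpow_zero, zpow_ofNat]; ring] at h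
  have z7 : ∀ k : ℕ, 1 - x * p * q * (p ^ 2) ^ k ≠ 0 := fun k => by
    have h := lattice_x hp hq hxL (1 : ℤ) (1 : ℤ) k
    rwa [show x * (p ^ (1 : ℤ) * q ^ (1 : ℤ)) = x * p * q from by simp only [zpow_neg, zpow_one, zpow_zero, zpow_ofNat]; ring] at h
  have z8 : ∀ k : ℕ, 1 - x * p ^ 2 * q⁻¹ * (p ^ 2) ^ k ≠ 0 := fun k => by
    have h := lattice_x hp hq hxL (2 : ℤ) (-1 : ℤ) k
    rwa [show x * (p ^ (2 : ℤ) * q ^ (-1 : ℤ)) = x * p ^ 2 * q⁻¹ from by simp only [zpow_neg, zpow_one, zpow_zero, zpow_ofNat]; ring] at h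
  have z9 : ∀ k : ℕ, 1 - x * p ^ 2 * q * (p ^ 2) ^ k ≠ 0 := fun k => by
    have h := lattice_x hp hq hxL (2 : ℤ) (1 : ℤ) k
    rwa [show x * (p ^ (2 : ℤ) * q ^ (1 : ℤ)) = x * p ^ 2 * q from by simp only [zpow_neg, zpow_one, zpow_zero, zpow_ofNat]; ring] at h
  have z10 : ∀ k : ℕ, 1 - x * p ^ 3 * q⁻¹ * (p ^ 2) ^ k ≠ 0 := fun k => by
    have h := lattice_x hp hq hxL (3 : ℤ) (-1 : ℤ) k
    rwa [show x * (p ^ (3 : ℤ) * q ^ (-1 : ℤ)) = x * p ^ 3 * q⁻¹ from by simp only [zpow_neg, zpow_one, zpow_zero, zpow_ofNat]; ring] at h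
  have w1 : ∀ k : ℕ, 1 - x⁻¹ * p * (p ^ 2) ^ k ≠ 0 := fun k => by
    have h := lattice_xinv hp hq hx hxL (1 : ℤ) (0 : ℤ) k
    rwa [show x⁻¹ * (p ^ (1 : ℤ) * q ^ (0 : ℤ)) = x⁻¹ * p from by simp only [zpow_neg, zpow_one, zpow_zero, zpow_ofNat]; ring] at h
  have w2 : ∀ k : ℕ, 1 - x⁻¹ * p ^ 3 * (p ^ 2) ^ k ≠ 0 := fun k => by
    have h := lattice_xinv hp hq hx hxL (3 : ℤ) (0 : ℤ) k
    rwa [show x⁻¹ * (p ^ (3 : ℤ) * q ^ (0 : ℤ)) = x⁻¹ * p ^ 3 from by simp only [zpow_neg, zpow_one, zpow_zero, zpow_ofNat]; ring] at h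
  have w3 : ∀ k : ℕ, 1 - x⁻¹ * p * q * (p ^ 2) ^ k ≠ 0 := fun k => by
    have h := lattice_xinv hp hq hx hxL (1 : ℤ) (1 : ℤ) k
    rwa [show x⁻¹ * (p ^ (1 : ℤ) * q ^ (1 : ℤ)) = x⁻¹ * p * q from by simp only [zpow_neg, zpow_one, zpow_zero, zpow_ofNat]; ring] at h
  have w4 : ∀ k : ℕ, 1 - x⁻¹ * p ^ 2 * q * (p ^ 2) ^ k ≠ 0 := fun k => by
    have h := lattice_xinv hp hq hx hxL (2 : ℤ) (1 : ℤ) k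
    rwa [show x⁻¹ * (p ^ (2 : ℤ) * q ^ (1 : ℤ)) = x⁻¹ * p ^ 2 * q from by simp only [zpow_neg, zpow_one, zpow_zero, zpow_ofNat]; ring] at h
  have w5 : ∀ k : ℕ, 1 - x⁻¹ * p ^ 2 * q⁻¹ * (p ^ 2) ^ k ≠ 0 := fun k => by
    have h := lattice_xinv hp hq hx hxL (2 : ℤ) (-1 : ℤ) k
    rwa [show x⁻¹ * (p ^ (2 : ℤ) * q ^ (-1 : ℤ)) = x⁻¹ * p ^ 2 * q⁻¹ from by simp only [zpow_neg, zpow_one, zpow_zero, zpow_ofNat]; ring] at h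
  have w6 : ∀ k : ℕ, 1 - x⁻¹ * p ^ 3 * q⁻¹ * (p ^ 2) ^ k ≠ 0 := fun k => by
    have h := lattice_xinv hp hq hx hxL (3 : ℤ) (-1 : ℤ) k
    rwa [show x⁻¹ * (p ^ (3 : ℤ) * q ^ (-1 : ℤ)) = x⁻¹ * p ^ 3 * q⁻¹ from by simp only [zpow_neg, zpow_one, zpow_zero, zpow_ofNat]; ring] at h
  have w7 : ∀ k : ℕ, 1 - x⁻¹ * p⁻¹ * q * (p ^ 2) ^ k ≠ 0 := fun k => by
    have h := lattice_xinv hp hq hx hxL (-1 : ℤ) (1 : ℤ) k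
    rwa [show x⁻¹ * (p ^ (-1 : ℤ) * q ^ (1 : ℤ)) = x⁻¹ * p⁻¹ * q from by simp only [zpow_neg, zpow_one, zpow_zero, zpow_ofNat]; ring] at h
  have w8 : ∀ k : ℕ, 1 - x⁻¹ * q⁻¹ * (p ^ 2) ^ k ≠ 0 := fun k => by
    have h := lattice_xinv hp hq hx hxL (0 : ℤ) (-1 : ℤ) k
    rwa [show x⁻¹ * (p ^ (0 : ℤ) * q ^ (-1 : ℤ)) = x⁻¹ * q⁻¹ from by simp only [zpow_neg, zpow_one, zpow_zero, zpow_ofNat]; ring] at h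
  have w9 : ∀ k : ℕ, 1 - x⁻¹ * q * (p ^ 2) ^ k ≠ 0 := fun k => by
    have h := lattice_xinv hp hq hx hxL (0 : ℤ) (1 : ℤ) k
    rwa [show x⁻¹ * (p ^ (0 : ℤ) * q ^ (1 : ℤ)) = x⁻¹ * q from by simp only [zpow_neg, zpow_one, zpow_zero, zpow_ofNat]; ring] at h
  have w10 : ∀ k : ℕ, 1 - x⁻¹ * p * q⁻¹ * (p ^ 2) ^ k ≠ 0 := fun k => by
    have h := lattice_xinv hp hq hx hxL (1 : ℤ) (-1 : ℤ) k
    rwa [show x⁻¹ * (p ^ (1 : ℤ) * q ^ (-1 : ℤ)) = x⁻¹ * p * q⁻¹ from by simp only [zpow_neg, zpow_one, zpow_zero, zpow_ofNat]; ring] at h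
  have w11 : ∀ k : ℕ, 1 - x⁻¹ * p⁻¹ * (p ^ 2) ^ k ≠ 0 := fun k => by
    have h := lattice_xinv hp hq hx hxL (-1 : ℤ) (0 : ℤ) k
    rwa [show x⁻¹ * (p ^ (-1 : ℤ) * q ^ (0 : ℤ)) = x⁻¹ * p⁻¹ from by simp only [zpow_neg, zpow_one, zpow_zero, zpow_ofNat]; ring] at h
  have lz1 : (1 : ℂ) - x * p ≠ 0 := by have h := z1 0; rwa [pow_zero, mul_one] at h
  have lz2 : (1 : ℂ) - x * q⁻¹ ≠ 0 := by have h := z2 0; rwa [pow_zero, mul_one] at h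
  have lz3 : (1 : ℂ) - x * p⁻¹ * q ≠ 0 := by have h := z3 0; rwa [pow_zero, mul_one] at h
  have lz4 : (1 : ℂ) - x * p⁻¹ ≠ 0 := by have h := z4 0; rwa [pow_zero, mul_one] at h
  have lz5 : (1 : ℂ) - x * q ≠ 0 := by have h := z5 0; rwa [pow_zero, mul_one] at h
  have lz6 : (1 : ℂ) - x * p * q⁻¹ ≠ 0 := by have h := z6 0; rwa [pow_zero, mul_one] at h
  have lz7 : (1 : ℂ) - x * p * q ≠ 0 := by have h := z7 0; rwa [pow_zero, mul_one] at h
  have lz8 : (1 : ℂ) - x * p ^ 2 * q⁻¹ ≠ 0 := by have h := z8 0; rwa [pow_zero, mul_one] at h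
  have lz9 : (1 : ℂ) - x * p ^ 2 * q ≠ 0 := by have h := z9 0; rwa [pow_zero, mul_one] at h
  have lz10 : (1 : ℂ) - x * p ^ 3 * q⁻¹ ≠ 0 := by have h := z10 0; rwa [pow_zero, mul_one] at h
  have lw1 : (1 : ℂ) - x⁻¹ * p ≠ 0 := by have h := w1 0; rwa [pow_zero, mul_one] at h
  have lw2 : (1 : ℂ) - x⁻¹ * p ^ 3 ≠ 0 := by have h := w2 0; rwa [pow_zero, mul_one] at h
  have lw3 : (1 : ℂ) - x⁻¹ * p * q ≠ 0 := by have h := w3 0; rwa [pow_zero, mul_one] at h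
  have lw4 : (1 : ℂ) - x⁻¹ * p ^ 2 * q ≠ 0 := by have h := w4 0; rwa [pow_zero, mul_one] at h
  have lw5 : (1 : ℂ) - x⁻¹ * p ^ 2 * q⁻¹ ≠ 0 := by have h := w5 0; rwa [pow_zero, mul_one] at h
  have lw6 : (1 : ℂ) - x⁻¹ * p ^ 3 * q⁻¹ ≠ 0 := by have h := w6 0; rwa [pow_zero, mul_one] at h
  have lw7 : (1 : ℂ) - x⁻¹ * p⁻¹ * q ≠ 0 := by have h := w7 0; rwa [pow_zero, mul_one] at h
  have lw8 : (1 : ℂ) - x⁻¹ * q⁻¹ ≠ 0 := by have h := w8 0; rwa [pow_zero, mul_one] at h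
  have lw9 : (1 : ℂ) - x⁻¹ * q ≠ 0 := by have h := w9 0; rwa [pow_zero, mul_one] at h
  have lw10 : (1 : ℂ) - x⁻¹ * p * q⁻¹ ≠ 0 := by have h := w10 0; rwa [pow_zero, mul_one] at h
  have lw11 : (1 : ℂ) - x⁻¹ * p⁻¹ ≠ 0 := by have h := w11 0; rwa [pow_zero, mul_one] at h
  have Qz1 : qPoch (x * p) (p ^ 2) ≠ 0 := qPoch_ne_zero_s3 ha z1
  have Qz7 : qPoch (x * p * q) (p ^ 2) ≠ 0 := qPoch_ne_zero_s3 ha z7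
  have Qz9 : qPoch (x * p ^ 2 * q) (p ^ 2) ≠ 0 := qPoch_ne_zero_s3 ha z9
  have Qz8 : qPoch (x * p ^ 2 * q⁻¹) (p ^ 2) ≠ 0 := qPoch_ne_zero_s3 ha z8
  have Qz10 : qPoch (x * p ^ 3 * q⁻¹) (p ^ 2) ≠ 0 := qPoch_ne_zero_s3 ha z10
  have Qw2 : qPoch (x⁻¹ * p ^ 3) (p ^ 2) ≠ 0 := qPoch_ne_zero_s3 ha w2
  have Qw3 : qPoch (x⁻¹ * p * q) (p ^ 2) ≠ 0 := qPoch_ne_zero_s3 ha w3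
  have Qw4 : qPoch (x⁻¹ * p ^ 2 * q) (p ^ 2) ≠ 0 := qPoch_ne_zero_s3 ha w4
  have Qw5 : qPoch (x⁻¹ * p ^ 2 * q⁻¹) (p ^ 2) ≠ 0 := qPoch_ne_zero_s3 ha w5
  have Qw6 : qPoch (x⁻¹ * p ^ 3 * q⁻¹) (p ^ 2) ≠ 0 := qPoch_ne_zero_s3 ha w6
  have QP : qPoch (p ^ 2) (p ^ 2) ≠ 0 := qPoch_ne_zero_s3 ha zP
  have ht1 : theta (p ^ 2) (x * p) = qPoch (x * p) (p ^ 2) * qPoch (x⁻¹ * p) (p ^ 2) * qPoch (p ^ 2) (p ^ 2) :=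
    theta_eq_s3 ha (by field_simp <;> ring) z1 w1 zP
  have ht2 : theta (p ^ 2) (x * q⁻¹) = qPoch (x * q⁻¹) (p ^ 2) * qPoch (x⁻¹ * p ^ 2 * q) (p ^ 2) * qPoch (p ^ 2) (p ^ 2) :=
    theta_eq_s3 ha (by field_simp <;> ring) z2 w4 zP
  have ht3 : theta (p ^ 2) (x * p⁻¹ * q) = qPoch (x * p⁻¹ * q) (p ^ 2) * qPoch (x⁻¹ * p ^ 3 * q⁻¹) (p ^ 2) * qPoch (p ^ 2) (p ^ 2) :=
    theta_eq_s3 ha (by field_simp <;> ring) z3 w6 zP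
  have ht4 : theta (p ^ 2) (x * p⁻¹) = qPoch (x * p⁻¹) (p ^ 2) * qPoch (x⁻¹ * p ^ 3) (p ^ 2) * qPoch (p ^ 2) (p ^ 2) :=
    theta_eq_s3 ha (by field_simp <;> ring) z4 w2 zP
  have ht5 : theta (p ^ 2) (x * q) = qPoch (x * q) (p ^ 2) * qPoch (x⁻¹ * p ^ 2 * q⁻¹) (p ^ 2) * qPoch (p ^ 2) (p ^ 2) :=
    theta_eq_s3 ha (by field_simp <;> ring) z5 w5 zP
  have ht6 : theta (p ^ 2) (x * p * q⁻¹) = qPoch (x * p * q⁻¹) (p ^ 2) * qPoch (x⁻¹ * p * q) (p ^ 2) * qPoch (p ^ 2) (p ^ 2) :=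
    theta_eq_s3 ha (by field_simp <;> ring) z6 w3 zP
  have hs1 : qPoch (x * q⁻¹) (p ^ 2) = (1 - x * q⁻¹) * qPoch (x * p ^ 2 * q⁻¹) (p ^ 2) :=
    qPoch_shift_s3 ha _ (by ring) z8
  have hs2 : qPoch (x * p⁻¹ * q) (p ^ 2) = (1 - x * p⁻¹ * q) * qPoch (x * p * q) (p ^ 2) :=
    qPoch_shift_s3 ha _ (by field_simp <;> ring) z7
  have hs3 : qPoch (x * p⁻¹) (p ^ 2) = (1 - x * p⁻¹) * qPoch (x * p) (p ^ 2) :=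
    qPoch_shift_s3 ha _ (by field_simp <;> ring) z1
  have hs4 : qPoch (x * q) (p ^ 2) = (1 - x * q) * qPoch (x * p ^ 2 * q) (p ^ 2) :=
    qPoch_shift_s3 ha _ (by ring) z9
  have hs5 : qPoch (x * p * q⁻¹) (p ^ 2) = (1 - x * p * q⁻¹) * qPoch (x * p ^ 3 * q⁻¹) (p ^ 2) :=
    qPoch_shift_s3 ha _ (by ring) z10
  have hs6 : qPoch (x⁻¹ * p) (p ^ 2) = (1 - x⁻¹ * p) * qPoch (x⁻¹ * p ^ 3) (p ^ 2) :=
    qPoch_shift_s3 ha _ (by ring) w2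
  have hs7 : qPoch (x⁻¹ * p⁻¹ * q) (p ^ 2) = (1 - x⁻¹ * p⁻¹ * q) * qPoch (x⁻¹ * p * q) (p ^ 2) :=
    qPoch_shift_s3 ha _ (by field_simp <;> ring) w3
  have hs8 : qPoch (x⁻¹ * q⁻¹) (p ^ 2) = (1 - x⁻¹ * q⁻¹) * qPoch (x⁻¹ * p ^ 2 * q⁻¹) (p ^ 2) :=
    qPoch_shift_s3 ha _ (by ring) w5
  have hs9 : qPoch (x⁻¹ * q) (p ^ 2) = (1 - x⁻¹ * q) * qPoch (x⁻¹ * p ^ 2 * q) (p ^ 2) :=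
    qPoch_shift_s3 ha _ (by ring) w4
  have hs10 : qPoch (x⁻¹ * p * q⁻¹) (p ^ 2) = (1 - x⁻¹ * p * q⁻¹) * qPoch (x⁻¹ * p ^ 3 * q⁻¹) (p ^ 2) :=
    qPoch_shift_s3 ha _ (by ring) w6
  simp only [STT, fDV]
  rw [ht1, ht2, ht3, ht4, ht5, ht6]
  rw [show x * p * p * q⁻¹ = x * p ^ 2 * q⁻¹ from by ring,
      show x * p * p * q = x * p ^ 2 * q from by ring,
      show x * p * p ^ 2 * q⁻¹ = x * p ^ 3 * q⁻¹ from by ring,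
      show x⁻¹ * p⁻¹ * p * q⁻¹ = x⁻¹ * q⁻¹ from by field_simp <;> ring,
      show x⁻¹ * p⁻¹ * p * q = x⁻¹ * q from by field_simp <;> ring,
      show x⁻¹ * p⁻¹ * p ^ 2 * q⁻¹ = x⁻¹ * p * q⁻¹ from by field_simp <;> ring]
  rw [hs1, hs2, hs3, hs4, hs5, hs6, hs7, hs8, hs9, hs10]
  set A : ℂ := qPoch (x * p) (p ^ 2) with hA
  set B : ℂ := qPoch (x⁻¹ * p ^ 3) (p ^ 2) with hB
  set C : ℂ := qPoch (x * p * q) (p ^ 2) with hC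
  set D : ℂ := qPoch (x * p ^ 2 * q) (p ^ 2) with hD
  set E : ℂ := qPoch (x * p ^ 2 * q⁻¹) (p ^ 2) with hE
  set F : ℂ := qPoch (x * p ^ 3 * q⁻¹) (p ^ 2) with hF
  set G : ℂ := qPoch (x⁻¹ * p * q) (p ^ 2) with hG
  set H : ℂ := qPoch (x⁻¹ * p ^ 2 * q) (p ^ 2) with hH
  set I : ℂ := qPoch (x⁻¹ * p ^ 2 * q⁻¹) (p ^ 2) with hI
  set J : ℂ := qPoch (x⁻¹ * p ^ 3 * q⁻¹) (p ^ 2) with hJ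
  set K : ℂ := qPoch (p ^ 2) (p ^ 2) with hK
  exact key_alg p q x A B C D E F G H I J K hp hq hx lz1 lz4 lz5 lz6 lw7 lw8 lw9 lw10 lw11
    Qz1 Qw2 Qz7 Qz9 Qz8 Qz10 Qw3 Qw4 Qw5 Qw6 QP
end

section
/- Let a ∈ ℂ with 0 < |a| < 1, and let x ∈ ℂ with x ≠ 0. Then the convergent infinite product θ_a(x) = ∏_{n≥1} (1 − x a^{n−1})(1 − x⁻¹ aⁿ)(1 − aⁿ) vanishes if and only if x = aᵐ for some integer m ∈ ℤ. -/
open Complex Filter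

lemma theta_factor_sub_one (a x : ℂ) (hx : x ≠ 0) (n : ℕ) :
    (1 - x * a ^ n) * (1 - x⁻¹ * a ^ (n + 1)) * (1 - a ^ (n + 1)) - 1
      = (-(x + x⁻¹ * a + a)) * a ^ n + (a + x * a + x⁻¹ * a ^ 2) * (a ^ 2) ^ n
        + (-(a ^ 2)) * (a ^ 3) ^ n := by
  have h : x⁻¹ * x = 1 := inv_mul_cancel₀ hx
  field_simp
  ring

lemma summable_sub_one (a x : ℂ) (ha1 : ‖a‖ < 1) (hx : x ≠ 0) :
    Summable (fun n : ℕ =>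
      (1 - x * a ^ n) * (1 - x⁻¹ * a ^ (n + 1)) * (1 - a ^ (n + 1)) - 1) := by
  have h1 : ‖a‖ < 1 := ha1
  have h2 : ‖a ^ 2‖ < 1 := by
    rw [norm_pow]; exact pow_lt_one₀ (norm_nonneg _) h1 (by norm_num)
  have h3 : ‖a ^ 3‖ < 1 := by
    rw [norm_pow]; exact pow_lt_one₀ (norm_nonneg _) h1 (by norm_num)
  have := (((summable_geometric_of_norm_lt_one h1).mul_left (-(x + x⁻¹ * a + a))).add
    ((summable_geometric_of_norm_lt_one h2).mul_left (a + x * a + x⁻¹ * a ^ 2))).add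
    ((summable_geometric_of_norm_lt_one h3).mul_left (-(a ^ 2)))
  exact this.congr fun n => (theta_factor_sub_one a x hx n).symm

lemma summable_log' (a x : ℂ) (ha1 : ‖a‖ < 1) (hx : x ≠ 0) :
    Summable (fun n : ℕ =>
      Complex.log ((1 - x * a ^ n) * (1 - x⁻¹ * a ^ (n + 1)) * (1 - a ^ (n + 1)))) := by
  have hs := summable_sub_one a x ha1 hx
  have hev : ∀ᶠ n in atTop, ‖(1 - x * a ^ n) * (1 - x⁻¹ * a ^ (n + 1)) * (1 - a ^ (n + 1)) - 1‖ ≤ 1/2 := by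
    have h := hs.tendsto_atTop_zero.eventually
      (Metric.ball_mem_nhds (0:ℂ) (by norm_num : (0:ℝ) < 1/2))
    filter_upwards [h] with n hn
    simpa [dist_eq_norm] using hn.le
  have hnorm : Summable (fun n : ℕ =>
      (3/2 : ℝ) * ‖(1 - x * a ^ n) * (1 - x⁻¹ * a ^ (n + 1)) * (1 - a ^ (n + 1)) - 1‖) :=
    (summable_norm_iff.mpr hs).mul_left _
  apply Summable.of_norm_bounded_eventually_nat hnorm
  filter_upwards [hev] with n hn
  have h1 : (1 - x * a ^ n) * (1 - x⁻¹ * a ^ (n + 1)) * (1 - a ^ (n + 1))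
      = 1 + ((1 - x * a ^ n) * (1 - x⁻¹ * a ^ (n + 1)) * (1 - a ^ (n + 1)) - 1) := by ring
  have h2 := Complex.norm_log_one_add_half_le_self hn
  rwa [← h1] at h2

lemma theta_ne_zero (a x : ℂ) (ha1 : ‖a‖ < 1) (hx : x ≠ 0)
    (hnz : ∀ n : ℕ, (1 - x * a ^ n) * (1 - x⁻¹ * a ^ (n + 1)) * (1 - a ^ (n + 1)) ≠ 0) :
    theta a x ≠ 0 := by
  have key := Complex.cexp_tsum_eq_tprod
    (f := fun n => (1 - x * a ^ n) * (1 - x⁻¹ * a ^ (n + 1)) * (1 - a ^ (n + 1)))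
    (fun n => hnz n) (summable_log' a x ha1 hx)
  have h2 := key
  rw [theta, ← h2]
  exact Complex.exp_ne_zero _

lemma tprod_eq_zero' {f : ℕ → ℂ} (n₀ : ℕ) (h : f n₀ = 0) : ∏' n, f n = 0 := by
  have : HasProd f 0 := by
    rw [HasProd]
    apply Tendsto.congr' _ tendsto_const_nhds
    filter_upwards [eventually_ge_atTop {n₀}] with s hs
    exact (Finset.prod_eq_zero (hs (Finset.mem_singleton_self n₀)) h).symm
  exact this.tprod_eq


/-- For `0 < |a| < 1` and `x ≠ 0`, the theta product `θ_a(x)` vanishes if and only if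
`x = aᵐ` for some integer `m`. -/
theorem theta_eq_zero_iff (a x : ℂ) (ha0 : 0 < ‖a‖) (ha1 : ‖a‖ < 1)
    (hx : x ≠ 0) :
    theta a x = 0 ↔ ∃ m : ℤ, x = a ^ m := by
  have ha : a ≠ 0 := by
    intro h; rw [h] at ha0; simp at ha0
  constructor
  · intro hzero
    by_contra h0
    push_neg at h0
    refine theta_ne_zero a x ha1 hx ?_ hzero
    intro n hn
    rcases mul_eq_zero.mp hn with h | h
    · rcases mul_eq_zero.mp h with h | h
      · have hone : x * a ^ n = 1 := by linear_combination -h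
        have : x = (a ^ n)⁻¹ := eq_inv_of_mul_eq_one_left hone
        exact h0 (-(n : ℤ)) (by rw [this, zpow_neg, zpow_natCast])
      · have hone : x⁻¹ * a ^ (n + 1) = 1 := by linear_combination -h
        have : a ^ (n + 1) = x := by
          have h2 := eq_inv_of_mul_eq_one_left hone
          exact (inv_inj.mp h2).symm
        exact h0 ((n : ℤ) + 1) (by rw [← this]; norm_cast)
    · have hone : a ^ (n + 1) = 1 := by linear_combination -h
      have h1 : ‖a‖ ^ (n + 1) = 1 := by
        rw [← norm_pow, hone, norm_one]
      have h2 : ‖a‖ ^ (n + 1) < 1 :=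
        pow_lt_one₀ (norm_nonneg a) ha1 (Nat.succ_ne_zero n)
      linarith
  · rintro ⟨m, rfl⟩
    rw [theta]
    rcases le_or_gt m 0 with hm | hm
    · apply tprod_eq_zero' ((-m).toNat)
      have h1 : (a : ℂ) ^ m * a ^ (((-m).toNat : ℕ)) = 1 := by
        rw [← zpow_natCast a ((-m).toNat), Int.toNat_of_nonneg (neg_nonneg.mpr hm),
          ← zpow_add₀ ha]
        simp
      have h2 : 1 - (a : ℂ) ^ m * a ^ (((-m).toNat : ℕ)) = 0 := by rw [h1]; ring
      rw [h2, zero_mul, zero_mul]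
    · apply tprod_eq_zero' ((m - 1).toNat)
      have h1 : ((a : ℂ) ^ m)⁻¹ * a ^ ((m - 1).toNat + 1) = 1 := by
        rw [← zpow_natCast a ((m - 1).toNat + 1)]
        push_cast
        rw [Int.toNat_of_nonneg (by omega : (0:ℤ) ≤ m - 1)]
        have : m - 1 + 1 = m := by ring
        rw [this]
        exact inv_mul_cancel₀ (zpow_ne_zero m ha)
      have h2 : 1 - ((a : ℂ) ^ m)⁻¹ * a ^ ((m - 1).toNat + 1) = 0 := by rw [h1]; ring
      rw [h2, mul_zero, zero_mul]
end
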